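/- arXiv:1008.4829 — 3 statements merged into one kernel-verified Lean document; each statement's English description precedes it below -/
import Mathlib

section
/- Let Γ be a rooted tree, let x_{i_t} be a leaf of Γ of level at least t-1, and let x_{i_1},…,x_{i_t} be the unique directed path on t vertices terminating at x_{i_t}. Then the sequence of S-modules 0 → S/(I_t(Γ∖{x_{i_t}}) : (x_{i_1}⋯x_{i_t})) → S/I_t(Γ∖{x_{i_t}}) → S/I_t(Γ) → 0, in which the first map is multiplication by the monomial x_{i_1}⋯x_{i_t} and the second map is the canonical projection, is a well-defined exact sequence. -/
open scoped Classical

/-- A rooted forest on the ambient vertex type `Fin n`: a set of vertices together with a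
parent function (each edge `(parent v, v)` is directed away from the roots).  The `acyclic`
field guarantees that parent chains strictly decrease some level function, so the underlying
graph is a forest in which every vertex has at most one parent. -/
structure RootedForest (n : ℕ) where
  verts : Set (Fin n)
  par : Fin n → Option (Fin n)
  par_none : ∀ v, v ∉ verts → par v = none
  mem_left : ∀ v u, par v = some u → v ∈ verts
  mem_right : ∀ v u, par v = some u → u ∈ verts
  acyclic : ∃ lvl : Fin n → ℕ, ∀ v u, par v = some u → lvl v = lvl u + 1

/-- A rooted tree: a rooted forest with exactly one root (hence connected). -/
structure RootedTreeOn (n : ℕ) extends RootedForest n where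
  root : Fin n
  root_mem : root ∈ verts
  root_par : par root = none
  root_unique : ∀ v ∈ verts, par v = none → v = root

namespace RootedForest

variable {n : ℕ}

/-- One step of the parent function, on `Option`. -/
def parStep (F : RootedForest n) : Option (Fin n) → Option (Fin n)
  | none => none
  | some v => F.par v

/-- The level of a vertex: its distance to the root of its component, i.e. the number of
(strict) ancestors of `v`. -/
noncomputable def level (F : RootedForest n) (v : Fin n) : ℕ :=
  sInf {m : ℕ | F.parStep^[m + 1] (some v) = none}

/-- The height of a rooted forest: the maximal level of a vertex. -/
noncomputable def height (F : RootedForest n) : ℕ :=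
  sSup (F.level '' F.verts)

/-- A leaf: a vertex with no children. -/
def IsLeaf (F : RootedForest n) (v : Fin n) : Prop :=
  v ∈ F.verts ∧ ∀ u, F.par u ≠ some v

/-- An isolated vertex: a vertex incident to no edge. -/
def Isolated (F : RootedForest n) (v : Fin n) : Prop :=
  v ∈ F.verts ∧ F.par v = none ∧ ∀ u, F.par u ≠ some v

/-- `F.IsPath t p` : `p 0, p 1, …, p (t-1)` is a directed path on `t` (distinct) vertices
in `F`, each consecutive pair being a directed edge. -/
def IsPath (F : RootedForest n) (t : ℕ) (p : ℕ → Fin n) : Prop :=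
  (∀ j, j < t → p j ∈ F.verts) ∧
  (∀ j, j + 1 < t → F.par (p (j + 1)) = some (p j)) ∧
  (∀ j k, j < t → k < t → p j = p k → j = k)

/-- `F.DescOrSelf x v` : `v = x` or `v` is a descendant of `x`. -/
def DescOrSelf (F : RootedForest n) (x v : Fin n) : Prop :=
  ∃ m : ℕ, F.parStep^[m] (some v) = some x

/-- The induced subforest obtained by deleting the vertices in `W` (and all incident
edges). -/
noncomputable def delete (F : RootedForest n) (W : Set (Fin n)) : RootedForest n where
  verts := F.verts \ W
  par v :=
    if v ∈ F.verts \ W then (F.par v).bind (fun u => if u ∈ W then none else some u)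
    else none
  par_none := by
    intro v hv
    simp only [if_neg hv]
  mem_left := by
    intro v u h
    by_cases hv : v ∈ F.verts \ W
    · exact hv
    · simp only [if_neg hv] at h
      exact absurd h (by simp)
  mem_right := by
    intro v u h
    by_cases hv : v ∈ F.verts \ W
    · simp only [if_pos hv, Option.bind_eq_some_iff] at h
      obtain ⟨w, hw, hw2⟩ := h
      by_cases hwW : w ∈ W
      · simp [hwW] at hw2
      · simp only [if_neg hwW, Option.some.injEq] at hw2
        subst hw2
        exact ⟨F.mem_right v w hw, hwW⟩
    · simp only [if_neg hv] at h
      exact absurd h (by simp)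
  acyclic := by
    obtain ⟨lvl, hlvl⟩ := F.acyclic
    refine ⟨lvl, fun v u h => ?_⟩
    by_cases hv : v ∈ F.verts \ W
    · simp only [if_pos hv, Option.bind_eq_some_iff] at h
      obtain ⟨w, hw, hw2⟩ := h
      by_cases hwW : w ∈ W
      · simp [hwW] at hw2
      · simp only [if_neg hwW, Option.some.injEq] at hw2
        subst hw2
        exact hlvl v w hw
    · simp only [if_neg hv] at h
      exact absurd h (by simp)

/-- The monomials corresponding to the directed paths on `t` vertices in `F`. -/
def pathGens (k : Type*) [Field k] (F : RootedForest n) (t : ℕ) :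
    Set (MvPolynomial (Fin n) k) :=
  {f | ∃ p : ℕ → Fin n, F.IsPath t p ∧ f = ∏ j ∈ Finset.range t, MvPolynomial.X (p j)}

/-- The path ideal `I_t(F)`: the ideal of `k[x_1,…,x_n]` generated by the monomials
corresponding to the directed paths on `t` vertices in `F`. -/
noncomputable def pathIdeal (k : Type*) [Field k] (F : RootedForest n) (t : ℕ) :
    Ideal (MvPolynomial (Fin n) k) :=
  Ideal.span (F.pathGens k t)

/-- `p_t(F)`: the maximal number of pairwise vertex-disjoint directed paths on `t+1`
vertices (i.e. of length `t`) in `F`. -/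
noncomputable def pDisj (F : RootedForest n) (t : ℕ) : ℕ :=
  sSup {N : ℕ | ∃ P : Fin N → (ℕ → Fin n),
    (∀ i, F.IsPath (t + 1) (P i)) ∧
    (∀ i i', i ≠ i' → ∀ j j', j < t + 1 → j' < t + 1 → P i j ≠ P i' j')}

/-- `l_s(F)`: the number of leaves of `F` whose level is at least `s - 1`. -/
noncomputable def lCount (F : RootedForest n) (s : ℕ) : ℕ :=
  Set.ncard {v | F.IsLeaf v ∧ s - 1 ≤ F.level v}

end RootedForest

namespace RootedForest

variable {n : ℕ}

lemma isPath_of_delete {F : RootedForest n} {W : Set (Fin n)} {t : ℕ} {q : ℕ → Fin n}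
    (h : (F.delete W).IsPath t q) : F.IsPath t q := by
  obtain ⟨hv, he, hi⟩ := h
  refine ⟨fun j hj => (hv j hj).1, fun j hj => ?_, hi⟩
  have hq := he j hj
  dsimp only [delete] at hq
  split_ifs at hq with hmem
  rw [Option.bind_eq_some_iff] at hq
  obtain ⟨w, hw, hw2⟩ := hq
  split_ifs at hw2 with hwW
  rwa [Option.some.inj hw2] at hw

lemma delete_isPath {F : RootedForest n} {W : Set (Fin n)} {t : ℕ} {q : ℕ → Fin n}
    (h : F.IsPath t q) (havoid : ∀ j, j < t → q j ∉ W) : (F.delete W).IsPath t q := by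
  obtain ⟨hv, he, hi⟩ := h
  refine ⟨fun j hj => ⟨hv j hj, havoid j hj⟩, fun j hj => ?_, hi⟩
  have hmem : q (j + 1) ∈ F.verts \ W := ⟨hv _ hj, havoid _ hj⟩
  dsimp only [delete]
  rw [if_pos hmem, he j hj, Option.bind_some, if_neg (havoid j (Nat.lt_of_succ_lt hj))]

lemma isPath_unique {F : RootedForest n} {t : ℕ} {p q : ℕ → Fin n}
    (hp : F.IsPath t p) (hq : F.IsPath t q) (hend : q (t - 1) = p (t - 1)) :
    ∀ j, j < t → q j = p j := by
  have key : ∀ m, m ≤ t - 1 → q (t - 1 - m) = p (t - 1 - m) := by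
    intro m
    induction m with
    | zero => intro _; simpa using hend
    | succ m ih =>
      intro hm
      have hm' : m ≤ t - 1 := Nat.le_of_succ_le hm
      have h1 : t - 1 - (m + 1) + 1 = t - 1 - m := by omega
      have h2 : t - 1 - (m + 1) + 1 < t := by omega
      have hqe := hq.2.1 (t - 1 - (m + 1)) h2
      have hpe := hp.2.1 (t - 1 - (m + 1)) h2
      rw [h1] at hqe hpe
      rw [ih hm'] at hqe
      rw [hpe] at hqe
      exact (Option.some.inj hqe).symm
  intro j hj
  have hje : j = t - 1 - (t - 1 - j) := by omega
  rw [hje]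
  exact key _ (by omega)

end RootedForest

open RootedForest in
/-- With `x = p (t-1)` a leaf of level at least `t-1` and
`f = x_{i_1}⋯x_{i_t}` the monomial of the unique directed path on `t` vertices terminating
at it, the sequence
`0 → S/(I_t(Γ∖{x}) : (f)) → S/I_t(Γ∖{x}) → S/I_t(Γ) → 0`,
with first map multiplication by `f` and second map the canonical projection, is a
well-defined exact sequence of `S`-modules. -/
theorem exact_sequence_pathIdeal {n t : ℕ} (ht : 2 ≤ t) (k : Type*) [Field k]
    (Γ : RootedTreeOn n) (x : Fin n) (p : ℕ → Fin n)
    (hleaf : Γ.toRootedForest.IsLeaf x)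
    (hlevel : t - 1 ≤ Γ.toRootedForest.level x)
    (hp : Γ.toRootedForest.IsPath t p) (hpt : p (t - 1) = x) :
    ∃ (φ : (MvPolynomial (Fin n) k ⧸
              (pathIdeal k (Γ.toRootedForest.delete {x}) t).colon
                ((Ideal.span {∏ j ∈ Finset.range t, MvPolynomial.X (p j)} :
                  Ideal (MvPolynomial (Fin n) k)) : Set (MvPolynomial (Fin n) k))) →ₗ[MvPolynomial (Fin n) k]
            (MvPolynomial (Fin n) k ⧸ pathIdeal k (Γ.toRootedForest.delete {x}) t))
      (ψ : (MvPolynomial (Fin n) k ⧸ pathIdeal k (Γ.toRootedForest.delete {x}) t) →ₗ[MvPolynomial (Fin n) k]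
            (MvPolynomial (Fin n) k ⧸ pathIdeal k Γ.toRootedForest t)),
      (∀ g : MvPolynomial (Fin n) k,
        φ (Submodule.Quotient.mk g) =
          Submodule.Quotient.mk ((∏ j ∈ Finset.range t, MvPolynomial.X (p j)) * g)) ∧
      (∀ g : MvPolynomial (Fin n) k,
        ψ (Submodule.Quotient.mk g) = Submodule.Quotient.mk g) ∧
      Function.Injective φ ∧ Function.Exact φ ψ ∧ Function.Surjective ψ := by
  classical
  set f : MvPolynomial (Fin n) k := ∏ j ∈ Finset.range t, MvPolynomial.X (p j) with hf
  set I' : Ideal (MvPolynomial (Fin n) k) := pathIdeal k (Γ.toRootedForest.delete {x}) t with hI'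
  set I : Ideal (MvPolynomial (Fin n) k) := pathIdeal k Γ.toRootedForest t with hI
  set J : Ideal (MvPolynomial (Fin n) k) := I'.colon ((Ideal.span {f} : Ideal (MvPolynomial (Fin n) k)) : Set (MvPolynomial (Fin n) k)) with hJ
  have hsub : I' ≤ I := by
    apply Ideal.span_mono
    rintro g ⟨q, hq, rfl⟩
    exact ⟨q, isPath_of_delete hq, rfl⟩
  have hfI : f ∈ I := Ideal.subset_span ⟨p, hp, rfl⟩
  have hsup : I = I' ⊔ Ideal.span {f} := by
    apply le_antisymm
    · apply Ideal.span_le.mpr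
      rintro g ⟨q, hq, rfl⟩
      by_cases hxq : ∃ j, j < t ∧ q j = x
      · obtain ⟨j, hj, hjx⟩ := hxq
        have hjt : j = t - 1 := by
          by_contra hne
          have hj1 : j + 1 < t := by omega
          have := hq.2.1 j hj1
          rw [hjx] at this
          exact hleaf.2 _ this
        have heq : ∀ i, i < t → q i = p i :=
          isPath_unique hp hq (by subst hjt; rw [hjx, hpt])
        have hprod : ∏ j ∈ Finset.range t, MvPolynomial.X (q j) = f :=
          Finset.prod_congr rfl (fun i hi => by rw [heq i (Finset.mem_range.mp hi)])
        rw [hprod]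
        exact Ideal.mem_sup_right (Ideal.subset_span rfl)
      · push_neg at hxq
        apply Ideal.mem_sup_left
        apply Ideal.subset_span
        refine ⟨q, delete_isPath hq (fun j hj hmem => ?_), rfl⟩
        exact hxq j hj hmem
    · exact sup_le hsub ((Ideal.span_singleton_le_iff_mem I).mpr hfI)
  have hJker : J ≤ LinearMap.ker (f • I'.mkQ) := by
    intro g hg
    rw [LinearMap.mem_ker, LinearMap.smul_apply, Submodule.mkQ_apply,
      ← Submodule.Quotient.mk_smul, Submodule.Quotient.mk_eq_zero, smul_eq_mul, mul_comm]
    exact Ideal.mem_colon_span_singleton.mp hg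
  have hI'ker : I' ≤ LinearMap.ker I.mkQ := by rw [Submodule.ker_mkQ]; exact hsub
  set φ := Submodule.liftQ J (f • I'.mkQ) hJker with hφdef
  set ψ := Submodule.liftQ I' I.mkQ hI'ker with hψdef
  have hφ : ∀ g : MvPolynomial (Fin n) k,
      φ (Submodule.Quotient.mk g) = Submodule.Quotient.mk (f * g) := by
    intro g
    rw [hφdef, Submodule.liftQ_apply, LinearMap.smul_apply, Submodule.mkQ_apply,
      ← Submodule.Quotient.mk_smul, smul_eq_mul]
  have hψ : ∀ g : MvPolynomial (Fin n) k,
      ψ (Submodule.Quotient.mk g) = Submodule.Quotient.mk g := by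
    intro g
    rw [hψdef, Submodule.liftQ_apply, Submodule.mkQ_apply]
  have hinj : Function.Injective φ := by
    rw [← LinearMap.ker_eq_bot, Submodule.eq_bot_iff]
    intro y hy
    obtain ⟨g, rfl⟩ := Submodule.Quotient.mk_surjective _ y
    rw [LinearMap.mem_ker, hφ g, Submodule.Quotient.mk_eq_zero] at hy
    rw [Submodule.Quotient.mk_eq_zero]
    exact Ideal.mem_colon_span_singleton.mpr (by rwa [mul_comm])
  have hexact : Function.Exact φ ψ := by
    intro y
    obtain ⟨g, rfl⟩ := Submodule.Quotient.mk_surjective _ y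
    constructor
    · intro hy
      rw [hψ g, Submodule.Quotient.mk_eq_zero] at hy
      rw [hsup] at hy
      obtain ⟨a, ha, b, hb, rfl⟩ := Submodule.mem_sup.mp hy
      obtain ⟨c, rfl⟩ := Ideal.mem_span_singleton'.mp hb
      refine ⟨Submodule.Quotient.mk c, ?_⟩
      rw [hφ c]
      rw [Submodule.Quotient.eq]
      have : f * c - (a + c * f) = -a := by ring
      rw [this]
      exact neg_mem ha
    · rintro ⟨z, hz⟩
      obtain ⟨c, rfl⟩ := Submodule.Quotient.mk_surjective _ z
      rw [← hz, hφ c, hψ (f * c), Submodule.Quotient.mk_eq_zero]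
      exact Ideal.mul_mem_right c I hfI
  have hsurj : Function.Surjective ψ := by
    intro y
    obtain ⟨g, rfl⟩ := Submodule.Quotient.mk_surjective _ y
    exact ⟨Submodule.Quotient.mk g, hψ g⟩
  exact ⟨φ, ψ, hφ, hψ, hinj, hexact, hsurj⟩
end

section
/- In the setup below (x_{i_t} a leaf at the highest level h ≥ t-1 of Γ), one has the equality of ideals I_t(Γ∖{x_{i_t}}) : (x_{i_1}⋯x_{i_t}) = I_t(Γ∖P) + (x_{i_0}) + Σ_{j=0}^{t-1} I_{t-j}(Δ_j∖P), where the summand (x_{i_0}) is omitted when x_{i_0} does not exist. -/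
open scoped Classical

open RootedForest

/-- Vertex set of `Γ_j`, the induced subtree of `Γ` rooted at `x_{i_j}`, for `j = 0,…,t`.
Here the path is indexed so that `x_{i_{j+1}} = p j`, and `x_{i_0}` is the parent of
`x_{i_1} = p 0` when it exists (when it does not exist, this set is empty for `j = 0`). -/
def GammaSet {n : ℕ} (Γ : RootedTreeOn n) (p : ℕ → Fin n) : ℕ → Set (Fin n)
  | 0 => {v | ∃ u, Γ.par (p 0) = some u ∧ Γ.toRootedForest.DescOrSelf u v}
  | j + 1 => {v | Γ.toRootedForest.DescOrSelf (p j) v}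

/-- The set `P = {x_{i_0}, x_{i_1}, …, x_{i_t}}` (with the parent `x_{i_0}` of `x_{i_1}`
omitted when it does not exist). -/
def Pset {n : ℕ} (Γ : RootedTreeOn n) (p : ℕ → Fin n) (t : ℕ) : Set (Fin n) :=
  {v | Γ.par (p 0) = some v} ∪ {v | ∃ j, j < t ∧ p j = v}

/-- The rooted forest `Δ_j ∖ P`, where `Δ_j = Γ_j ∖ Γ_{j+1}`. -/
noncomputable def DeltaDel {n : ℕ} (Γ : RootedTreeOn n) (p : ℕ → Fin n) (t j : ℕ) :
    RootedForest n :=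
  Γ.toRootedForest.delete ((GammaSet Γ p j \ GammaSet Γ p (j + 1))ᶜ ∪ Pset Γ p t)

namespace RootedForest

variable {n : ℕ}

lemma parStep_iter_none (F : RootedForest n) (m : ℕ) : F.parStep^[m] none = none := by
  induction m with
  | zero => rfl
  | succ m ih => rw [Function.iterate_succ_apply]; exact ih

lemma parStep_some (F : RootedForest n) (v : Fin n) : F.parStep (some v) = F.par v := rfl

lemma lvl_iter {F : RootedForest n} {lvl : Fin n → ℕ}
    (hlvl : ∀ v u, F.par v = some u → lvl v = lvl u + 1) :
    ∀ m v w, F.parStep^[m] (some v) = some w → lvl v = lvl w + m := by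
  intro m
  induction m with
  | zero => intro v w h; cases Option.some.inj h; rfl
  | succ m ih =>
    intro v w h
    rw [Function.iterate_succ_apply, parStep_some] at h
    cases hpar : F.par v with
    | none => rw [hpar, parStep_iter_none] at h; cases h
    | some u =>
      rw [hpar] at h
      have h1 := ih u w h
      have h2 := hlvl v u hpar
      omega

lemma exists_iter_none (F : RootedForest n) (v : Fin n) :
    ∃ m, F.parStep^[m + 1] (some v) = none := by
  obtain ⟨lvl, hlvl⟩ := F.acyclic
  refine ⟨lvl v, ?_⟩
  cases h : F.parStep^[lvl v + 1] (some v) with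
  | none => rfl
  | some w => have := lvl_iter hlvl _ _ _ h; omega

lemma level_spec (F : RootedForest n) (v : Fin n) :
    F.parStep^[F.level v + 1] (some v) = none :=
  Nat.sInf_mem (F.exists_iter_none v)

lemma level_min (F : RootedForest n) {v : Fin n} {m : ℕ}
    (h : F.parStep^[m + 1] (some v) = none) : F.level v ≤ m :=
  Nat.sInf_le h

lemma level_parent (F : RootedForest n) {v u : Fin n} (h : F.par v = some u) :
    F.level v = F.level u + 1 := by
  have hA : ∀ m : ℕ, F.parStep^[m + 1] (some v) = F.parStep^[m] (some u) := by
    intro m; rw [Function.iterate_succ_apply, parStep_some, h]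
  have h1 : F.level v ≤ F.level u + 1 := by
    apply F.level_min
    rw [hA]
    exact F.level_spec u
  have h0 : F.level v ≠ 0 := by
    intro h0
    have hs := F.level_spec v
    rw [h0, hA 0] at hs
    exact Option.some_ne_none u hs
  have h2 : F.level u ≤ F.level v - 1 := by
    apply F.level_min
    have hs := F.level_spec v
    rw [show F.level v + 1 = (F.level v - 1 + 1) + 1 by omega, hA] at hs
    exact hs
  omega

lemma level_iter (F : RootedForest n) :
    ∀ (m : ℕ) (v w : Fin n), F.parStep^[m] (some v) = some w →
      F.level v = F.level w + m := by
  intro m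
  induction m with
  | zero => intro v w h; cases Option.some.inj h; rfl
  | succ m ih =>
    intro v w h
    rw [Function.iterate_succ_apply, parStep_some] at h
    cases hpar : F.par v with
    | none => rw [hpar, parStep_iter_none] at h; cases h
    | some u =>
      rw [hpar] at h
      have h1 := ih u w h
      have h2 := F.level_parent hpar
      omega

lemma level_le_height (F : RootedForest n) {v : Fin n} (hv : v ∈ F.verts) :
    F.level v ≤ F.height :=
  le_csSup ((Set.toFinite F.verts).image F.level).bddAbove (Set.mem_image_of_mem _ hv)

/-- Characterization of paths in a deletion. -/
lemma isPath_delete_iff (F : RootedForest n) (W : Set (Fin n)) (t : ℕ) (q : ℕ → Fin n) :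
    (F.delete W).IsPath t q ↔ F.IsPath t q ∧ ∀ i, i < t → q i ∉ W := by
  constructor
  · rintro ⟨hv, he, hi⟩
    have hW : ∀ i, i < t → q i ∉ W := fun i hi' => (hv i hi').2
    refine ⟨⟨fun i hi' => (hv i hi').1, fun i hi' => ?_, hi⟩, hW⟩
    · have hthis := he i hi'
      have hmem : q (i + 1) ∈ F.verts \ W := hv (i+1) (by omega)
      simp only [delete, if_pos hmem, Option.bind_eq_some_iff] at hthis
      obtain ⟨w, hw, hw2⟩ := hthis
      by_cases hwW : w ∈ W
      · simp [hwW] at hw2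
      · simp only [if_neg hwW, Option.some.injEq] at hw2
        rwa [hw2] at hw
  · rintro ⟨⟨hv, he, hi⟩, hW⟩
    refine ⟨fun i hi' => ⟨hv i hi', hW i hi'⟩, fun i hi' => ?_, hi⟩
    simp only [delete]
    rw [if_pos (Set.mem_diff _ |>.2 ⟨hv (i+1) (by omega), hW (i+1) (by omega)⟩),
      he i hi', Option.bind_some, if_neg (hW i (by omega))]

/-- Shifting a path. -/
lemma IsPath.shift {F : RootedForest n} {t : ℕ} {q : ℕ → Fin n} (h : F.IsPath t q)
    (s ℓ : ℕ) (hs : s + ℓ ≤ t) : F.IsPath ℓ (fun i => q (s + i)) := by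
  obtain ⟨hv, he, hi⟩ := h
  refine ⟨fun i hi' => hv _ (by omega), fun i hi' => ?_, fun i j hi' hj' hij => ?_⟩
  · show F.par (q (s + (i + 1))) = some (q (s + i))
    rw [show s + (i + 1) = (s + i) + 1 by omega]
    exact he _ (by omega)
  · have := hi _ _ (by omega : s + i < t) (by omega : s + j < t) hij
    omega

/-- Vertices along a path descend from earlier ones. -/
lemma IsPath.iter_eq {F : RootedForest n} {t : ℕ} {q : ℕ → Fin n} (h : F.IsPath t q) :
    ∀ (d i : ℕ), i + d < t → F.parStep^[d] (some (q (i + d))) = some (q i) := by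
  intro d
  induction d with
  | zero => intro i _; rfl
  | succ d ih =>
    intro i hi
    rw [show i + (d + 1) = (i + d) + 1 by omega, Function.iterate_succ_apply, parStep_some,
      h.2.1 (i + d) (by omega)]
    exact ih i (by omega)

lemma IsPath.level_add {F : RootedForest n} {t : ℕ} {q : ℕ → Fin n} (h : F.IsPath t q)
    (d i : ℕ) (hi : i + d < t) : F.level (q (i + d)) = F.level (q i) + d :=
  F.level_iter d _ _ (h.iter_eq d i hi)

end RootedForest

section Monomials

open MvPolynomial

variable {n : ℕ} {k : Type*} [Field k]

/-- The squarefree exponent vector of the first `t` vertices of `q`. -/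
noncomputable def sqf (q : ℕ → Fin n) (t : ℕ) : Fin n →₀ ℕ :=
  ∑ j ∈ Finset.range t, Finsupp.single (q j) 1

lemma sqf_apply (q : ℕ → Fin n) (t : ℕ) (v : Fin n) :
    sqf q t v = ∑ j ∈ Finset.range t, if q j = v then 1 else 0 := by
  rw [sqf, Finsupp.finset_sum_apply]
  exact Finset.sum_congr rfl fun j _ => Finsupp.single_apply

lemma one_le_sqf {q : ℕ → Fin n} {t : ℕ} {v : Fin n} {j : ℕ} (hj : j < t) (hv : q j = v) :
    1 ≤ sqf q t v := by
  rw [sqf_apply]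
  calc (1 : ℕ) = if q j = v then 1 else 0 := by rw [if_pos hv]
    _ ≤ _ := Finset.single_le_sum (f := fun j => if q j = v then 1 else 0)
        (fun i _ => Nat.zero_le _) (Finset.mem_range.2 hj)

lemma sqf_eq_zero {q : ℕ → Fin n} {t : ℕ} {v : Fin n} (h : ∀ j, j < t → q j ≠ v) :
    sqf q t v = 0 := by
  rw [sqf_apply]
  exact Finset.sum_eq_zero fun j hj => if_neg (h j (Finset.mem_range.1 hj))

lemma sqf_le_one {q : ℕ → Fin n} {t : ℕ}
    (hinj : ∀ i j, i < t → j < t → q i = q j → i = j) (v : Fin n) :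
    sqf q t v ≤ 1 := by
  rw [sqf_apply, Finset.sum_boole, Nat.cast_id]
  apply Finset.card_le_one.2
  intro a ha b hb
  simp only [Finset.mem_filter, Finset.mem_range] at ha hb
  exact hinj a b ha.1 hb.1 (ha.2.trans hb.2.symm)

lemma sqf_le {q : ℕ → Fin n} {t : ℕ}
    (hinj : ∀ i j, i < t → j < t → q i = q j → i = j) {d : Fin n →₀ ℕ}
    (hd : ∀ i, i < t → 1 ≤ d (q i)) : sqf q t ≤ d := by
  rw [Finsupp.le_def]
  intro v
  by_cases hv : ∃ i, i < t ∧ q i = v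
  · obtain ⟨i, hi, rfl⟩ := hv
    exact le_trans (sqf_le_one hinj _) (hd i hi)
  · push_neg at hv
    rw [sqf_eq_zero hv]
    exact Nat.zero_le _

lemma X_eq_monomial (u : Fin n) :
    (X u : MvPolynomial (Fin n) k) = monomial (Finsupp.single u 1) 1 := by
  rw [← pow_one (X u : MvPolynomial (Fin n) k), X_pow_eq_monomial]

lemma prod_X_eq (q : ℕ → Fin n) (t : ℕ) :
    (∏ j ∈ Finset.range t, (X (q j) : MvPolynomial (Fin n) k)) = monomial (sqf q t) 1 := by
  induction t with
  | zero => simp [sqf, monomial_zero']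
  | succ t ih =>
    rw [Finset.prod_range_succ, ih,
      show sqf q (t + 1) = sqf q t + Finsupp.single (q t) 1 from Finset.sum_range_succ _ t,
      monomial_add_single, pow_one]

open RootedForest in
lemma pathIdeal_eq (F : RootedForest n) (t : ℕ) :
    pathIdeal k F t =
      Ideal.span ((fun s => (monomial s (1:k) : MvPolynomial (Fin n) k)) ''
        {s | ∃ q, F.IsPath t q ∧ s = sqf q t}) := by
  unfold RootedForest.pathIdeal
  congr 1
  ext f
  constructor
  · rintro ⟨q, hq, rfl⟩
    exact ⟨sqf q t, ⟨q, hq, rfl⟩, (prod_X_eq q t).symm⟩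
  · rintro ⟨s, ⟨q, hq, rfl⟩, rfl⟩
    exact ⟨q, hq, (prod_X_eq q t).symm⟩

lemma Bspan_eq (Γ : RootedTreeOn n) (p : ℕ → Fin n) :
    Ideal.span {f : MvPolynomial (Fin n) k | ∃ u, Γ.par (p 0) = some u ∧ f = X u} =
      Ideal.span ((fun s => (monomial s (1:k) : MvPolynomial (Fin n) k)) ''
        {s | ∃ u, Γ.par (p 0) = some u ∧ s = Finsupp.single u 1}) := by
  congr 1
  ext f
  constructor
  · rintro ⟨u, hu, rfl⟩
    exact ⟨_, ⟨u, hu, rfl⟩, (X_eq_monomial u).symm⟩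
  · rintro ⟨s, ⟨u, hu, rfl⟩, rfl⟩
    exact ⟨u, hu, X_eq_monomial u⟩

lemma span_biUnion {ι : Type*} (s : Finset ι) (T : ι → Set (MvPolynomial (Fin n) k)) :
    Ideal.span (⋃ j ∈ s, T j) = ∑ j ∈ s, Ideal.span (T j) := by
  classical
  induction s using Finset.induction_on with
  | empty => simp
  | @insert a s ha ih =>
    rw [Finset.set_biUnion_insert, Ideal.span_union, ih, Finset.sum_insert ha,
      Submodule.add_eq_sup]

end Monomials

section Witnesses

open RootedForest MvPolynomial

variable {n t : ℕ} {Γ : RootedTreeOn n} {p : ℕ → Fin n}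

/-- Backward direction core: each generator of the right-hand side, multiplied by the
path monomial, is divisible by a path monomial of `Γ ∖ {p (t-1)}`. -/
lemma exists_path_witness (ht : 2 ≤ t)
    (hp : Γ.toRootedForest.IsPath t p)
    (hlev : Γ.toRootedForest.level (p (t - 1)) = Γ.toRootedForest.height)
    {a : Fin n →₀ ℕ}
    (ha : a ∈ ({s | ∃ q, (Γ.toRootedForest.delete (Pset Γ p t)).IsPath t q ∧ s = sqf q t}
        ∪ {s | ∃ u, Γ.par (p 0) = some u ∧ s = Finsupp.single u 1}
        ∪ ⋃ j ∈ Finset.range t,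
            {s | ∃ q, (DeltaDel Γ p t j).IsPath (t - j) q ∧ s = sqf q (t - j)})) :
    ∃ s ∈ {s | ∃ q, (Γ.toRootedForest.delete ({p (t-1)} : Set (Fin n))).IsPath t q ∧
        s = sqf q t}, s ≤ a + sqf p t := by
  classical
  have hpF := hp
  obtain ⟨hpv, hpe, hpi⟩ := hp
  have hlevp : ∀ i j : ℕ, i ≤ j → j < t →
      Γ.toRootedForest.level (p j) = Γ.toRootedForest.level (p i) + (j - i) := by
    intro i j hij hj
    have h := hpF.level_add (j - i) i (by omega)
    rwa [show i + (j - i) = j by omega] at h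
  rcases ha with (⟨q, hq, rfl⟩ | ⟨u, hu, rfl⟩) | hC
  · -- generator of I_t(Γ∖P)
    obtain ⟨hqF, hqW⟩ := (RootedForest.isPath_delete_iff _ _ _ _).1 hq
    refine ⟨sqf q t, ⟨q, (RootedForest.isPath_delete_iff _ _ _ _).2 ⟨hqF, ?_⟩, rfl⟩,
      le_add_of_nonneg_right zero_le⟩
    intro i hi hmem
    rw [Set.mem_singleton_iff] at hmem
    exact hqW i hi (Set.mem_union _ _ _ |>.2 (Or.inr ⟨t - 1, by omega, hmem.symm⟩))
  · -- generator x_{i_0}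
    set r : ℕ → Fin n := fun i => if i = 0 then u else p (i - 1) with hr
    have hlev0 := Γ.toRootedForest.level_parent hu
    have hunep : ∀ j, j < t → u ≠ p j := by
      intro j hj heq
      have h1 := hlevp 0 j (by omega) hj
      rw [← heq] at h1
      omega
    have hrpath : Γ.toRootedForest.IsPath t r := by
      refine ⟨?_, ?_, ?_⟩
      · intro i hi
        by_cases h0 : i = 0
        · show (if i = 0 then u else p (i-1)) ∈ _
          rw [if_pos h0]
          exact Γ.toRootedForest.mem_right _ _ hu
        · show (if i = 0 then u else p (i-1)) ∈ _
          rw [if_neg h0]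
          exact hpv _ (by omega)
      · intro i hi
        by_cases h0 : i = 0
        · subst h0
          show Γ.toRootedForest.par (if (0:ℕ) + 1 = 0 then u else p (0 + 1 - 1)) =
            some (if (0:ℕ) = 0 then u else p (0 - 1))
          rw [if_neg (by omega : ¬ (0:ℕ) + 1 = 0), if_pos rfl]
          exact hu
        · show Γ.toRootedForest.par (if i + 1 = 0 then u else p (i + 1 - 1)) =
            some (if i = 0 then u else p (i - 1))
          rw [if_neg (by omega : ¬ i + 1 = 0), if_neg h0]
          have h := hpe (i - 1) (by omega)
          rwa [show (i - 1) + 1 = (i + 1) - 1 by omega] at h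
      · intro i j hi hj hij
        simp only [hr] at hij
        by_cases h0 : i = 0 <;> by_cases h1 : j = 0
        · omega
        · exfalso
          rw [if_pos h0, if_neg h1] at hij
          exact hunep (j - 1) (by omega) hij
        · exfalso
          rw [if_neg h0, if_pos h1] at hij
          exact hunep (i - 1) (by omega) hij.symm
        · rw [if_neg h0, if_neg h1] at hij
          have := hpi _ _ (by omega : i - 1 < t) (by omega) hij
          omega
    have hrdel : (Γ.toRootedForest.delete ({p (t-1)} : Set (Fin n))).IsPath t r := by
      refine (RootedForest.isPath_delete_iff _ _ _ _).2 ⟨hrpath, ?_⟩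
      intro i hi hmem
      rw [Set.mem_singleton_iff] at hmem
      by_cases h0 : i = 0
      · rw [show r i = u by rw [hr]; simp [h0]] at hmem
        exact hunep (t - 1) (by omega) hmem
      · rw [show r i = p (i - 1) by rw [hr]; simp [h0]] at hmem
        have := hpi _ _ (by omega : i - 1 < t) (by omega : t - 1 < t) hmem
        omega
    refine ⟨sqf r t, ⟨r, hrdel, rfl⟩, sqf_le hrpath.2.2 ?_⟩
    intro i hi
    rw [Finsupp.add_apply]
    by_cases h0 : i = 0
    · rw [show r i = u by rw [hr]; simp [h0], Finsupp.single_eq_same]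
      omega
    · rw [show r i = p (i - 1) by rw [hr]; simp [h0]]
      have := one_le_sqf (q := p) (t := t) (by omega : i - 1 < t) rfl
      omega
  · -- generator of I_{t-j}(Δ_j ∖ P)
    rw [Set.mem_iUnion₂] at hC
    obtain ⟨j, hjmem, q, hq, rfl⟩ := hC
    rw [Finset.mem_range] at hjmem
    obtain ⟨hqF, hqW⟩ := (RootedForest.isPath_delete_iff _ _ _ _).1 hq
    have hqG : ∀ i, i < t - j → q i ∈ GammaSet Γ p j \ GammaSet Γ p (j+1) := by
      intro i hi
      by_contra hcon
      exact hqW i hi (Set.mem_union _ _ _ |>.2 (Or.inl hcon))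
    have hqP : ∀ i, i < t - j → q i ∉ Pset Γ p t := fun i hi hmem =>
      hqW i hi (Set.mem_union _ _ _ |>.2 (Or.inr hmem))
    by_cases hj0 : j = 0
    · subst hj0
      rw [Nat.sub_zero] at hqF hqP ⊢
      refine ⟨sqf q t, ⟨q, (RootedForest.isPath_delete_iff _ _ _ _).2 ⟨hqF, ?_⟩, rfl⟩,
        le_add_of_nonneg_right zero_le⟩
      intro i hi hmem
      rw [Set.mem_singleton_iff] at hmem
      exact hqP i hi (Set.mem_union _ _ _ |>.2 (Or.inr ⟨t - 1, by omega, hmem.symm⟩))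
    · -- j ≥ 1 : the head of q is a child of p (j-1)
      have hq0G : Γ.toRootedForest.DescOrSelf (p (j-1)) (q 0) := by
        have h := (hqG 0 (by omega)).1
        rw [show j = (j - 1) + 1 by omega] at h
        exact h
      obtain ⟨m, hm⟩ := hq0G
      have hm0 : m ≠ 0 := by
        intro h0
        rw [h0, Function.iterate_zero_apply] at hm
        have heq : q 0 = p (j - 1) := Option.some.inj hm
        exact hqP 0 (by omega)
          (Set.mem_union _ _ _ |>.2 (Or.inr ⟨j - 1, by omega, heq.symm⟩))
      have hl1 : Γ.toRootedForest.level (q 0) = Γ.toRootedForest.level (p (j-1)) + m :=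
        Γ.toRootedForest.level_iter m _ _ hm
      have hl2 : Γ.toRootedForest.level (q (0 + (t - j - 1)))
          = Γ.toRootedForest.level (q 0) + (t - j - 1) :=
        hqF.level_add (t - j - 1) 0 (by omega)
      rw [Nat.zero_add] at hl2
      have hl3 := hlevp (j-1) (t-1) (by omega) (by omega)
      have hl4 : Γ.toRootedForest.level (q (t - j - 1))
          ≤ Γ.toRootedForest.level (p (t-1)) := by
        rw [hlev]
        exact Γ.toRootedForest.level_le_height (hqF.1 _ (by omega))
      have hm1 : m = 1 := by omega
      rw [hm1, Function.iterate_one, RootedForest.parStep_some] at hm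
      -- hm : Γ.toRootedForest.par (q 0) = some (p (j-1))
      set r : ℕ → Fin n := fun i => if i < j then p i else q (i - j) with hr
      have hrpath : Γ.toRootedForest.IsPath t r := by
        refine ⟨?_, ?_, ?_⟩
        · intro i hi
          show (if i < j then p i else q (i - j)) ∈ _
          by_cases hij : i < j
          · rw [if_pos hij]; exact hpv i (by omega)
          · rw [if_neg hij]; exact hqF.1 _ (by omega)
        · intro i hi
          show Γ.toRootedForest.par (if i + 1 < j then p (i+1) else q (i + 1 - j)) =
            some (if i < j then p i else q (i - j))
          by_cases h1 : i + 1 < j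
          · rw [if_pos h1, if_pos (by omega : i < j)]
            exact hpe i (by omega)
          · by_cases h2 : i + 1 = j
            · rw [if_neg (by omega : ¬ i + 1 < j), if_pos (by omega : i < j),
                show i + 1 - j = 0 by omega, show i = j - 1 by omega]
              exact hm
            · rw [if_neg (by omega : ¬ i + 1 < j), if_neg (by omega : ¬ i < j)]
              have h := hqF.2.1 (i - j) (by omega)
              rwa [show (i - j) + 1 = (i + 1) - j by omega] at h
        · intro i l hi hl hil
          simp only [hr] at hil
          by_cases h1 : i < j <;> by_cases h2 : l < j
          · rw [if_pos h1, if_pos h2] at hil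
            exact hpi i l (by omega) (by omega) hil
          · exfalso
            rw [if_pos h1, if_neg h2] at hil
            exact hqP (l - j) (by omega)
              (Set.mem_union _ _ _ |>.2 (Or.inr ⟨i, by omega, hil⟩))
          · exfalso
            rw [if_neg h1, if_pos h2] at hil
            exact hqP (i - j) (by omega)
              (Set.mem_union _ _ _ |>.2 (Or.inr ⟨l, by omega, hil.symm⟩))
          · rw [if_neg h1, if_neg h2] at hil
            have := hqF.2.2 _ _ (by omega : i - j < t - j) (by omega) hil
            omega
      have hrdel : (Γ.toRootedForest.delete ({p (t-1)} : Set (Fin n))).IsPath t r := by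
        refine (RootedForest.isPath_delete_iff _ _ _ _).2 ⟨hrpath, ?_⟩
        intro i hi hmem
        rw [Set.mem_singleton_iff] at hmem
        by_cases h1 : i < j
        · rw [show r i = p i by rw [hr]; simp [h1]] at hmem
          have := hpi i (t-1) (by omega) (by omega) hmem
          omega
        · rw [show r i = q (i - j) by rw [hr]; simp [h1]] at hmem
          exact hqP (i - j) (by omega)
            (Set.mem_union _ _ _ |>.2 (Or.inr ⟨t - 1, by omega, hmem.symm⟩))
      refine ⟨sqf r t, ⟨r, hrdel, rfl⟩, sqf_le hrpath.2.2 ?_⟩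
      intro i hi
      rw [Finsupp.add_apply]
      by_cases h1 : i < j
      · rw [show r i = p i by rw [hr]; simp [h1]]
        have := one_le_sqf (q := p) (t := t) (by omega : i < t) rfl
        omega
      · rw [show r i = q (i - j) by rw [hr]; simp [h1]]
        have := one_le_sqf (q := q) (t := t - j) (by omega : i - j < t - j) rfl
        omega

/-- Forward direction core: each path monomial of `Γ ∖ {p (t-1)}`, divided by its gcd with
the path monomial of `p`, dominates some generator of the right-hand side. -/
lemma exists_gen_witness (ht : 2 ≤ t)
    (hp : Γ.toRootedForest.IsPath t p)
    {q : ℕ → Fin n} (hq : (Γ.toRootedForest.delete ({p (t-1)} : Set (Fin n))).IsPath t q)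
    {d : Fin n →₀ ℕ} (hle : sqf q t ≤ d + sqf p t) :
    ∃ g ∈ ({s | ∃ q', (Γ.toRootedForest.delete (Pset Γ p t)).IsPath t q' ∧ s = sqf q' t}
        ∪ {s | ∃ u, Γ.par (p 0) = some u ∧ s = Finsupp.single u 1}
        ∪ ⋃ j ∈ Finset.range t,
            {s | ∃ q', (DeltaDel Γ p t j).IsPath (t - j) q' ∧ s = sqf q' (t - j)}),
      g ≤ d := by
  classical
  have hpF := hp
  obtain ⟨hpv, hpe, hpi⟩ := hp
  obtain ⟨hqF, hqW⟩ := (RootedForest.isPath_delete_iff _ _ _ _).1 hq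
  have hqlast : ∀ i, i < t → q i ≠ p (t-1) := by
    intro i hi heq
    exact hqW i hi (Set.mem_singleton_iff.2 heq)
  have hpoint : ∀ v, sqf q t v ≤ d v + sqf p t v := fun v => by
    have h := Finsupp.le_def.1 hle v
    rwa [Finsupp.add_apply] at h
  have hdpos : ∀ i, i < t → (∀ j, j < t → q i ≠ p j) → 1 ≤ d (q i) := by
    intro i hi hnp
    have h1 := one_le_sqf (q := q) (t := t) hi rfl
    have h2 : sqf p t (q i) = 0 := sqf_eq_zero (fun j hj heq => hnp j hj heq.symm)
    have h3 := hpoint (q i)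
    omega
  have hlevp : ∀ i j : ℕ, i ≤ j → j < t →
      Γ.toRootedForest.level (p j) = Γ.toRootedForest.level (p i) + (j - i) := by
    intro i j hij hj
    have h := hpF.level_add (j - i) i (by omega)
    rwa [show i + (j - i) = j by omega] at h
  by_cases hB : ∃ u, Γ.par (p 0) = some u ∧ ∃ i, i < t ∧ q i = u
  · -- the parent x_{i_0} occurs among the vertices of q
    obtain ⟨u, hu, i, hi, hqi⟩ := hB
    refine ⟨Finsupp.single u 1,
      Set.mem_union _ _ _ |>.2 (Or.inl (Set.mem_union _ _ _ |>.2 (Or.inr ⟨u, hu, rfl⟩))), ?_⟩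
    rw [Finsupp.single_le_iff]
    have hup : ∀ j, j < t → q i ≠ p j := by
      intro j hj heq
      have h0 := Γ.toRootedForest.level_parent hu
      have h1 := hlevp 0 j (by omega) hj
      have h2 : u = p j := hqi.symm.trans heq
      rw [← h2] at h1
      omega
    rw [← hqi]
    exact hdpos i hi hup
  · by_cases hA : ∀ i, i < t → ∀ j, j < t → q i ≠ p j
    · -- q is disjoint from P
      refine ⟨sqf q t,
        Set.mem_union _ _ _ |>.2 (Or.inl (Set.mem_union _ _ _ |>.2 (Or.inl ⟨q, ?_, rfl⟩))),
        sqf_le hqF.2.2 (fun i hi => hdpos i hi (hA i hi))⟩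
      refine (RootedForest.isPath_delete_iff _ _ _ _).2 ⟨hqF, ?_⟩
      intro i hi hmem
      rcases (Set.mem_union _ _ _).1 hmem with hm1 | hm2
      · exact hB ⟨q i, hm1, i, hi, rfl⟩
      · obtain ⟨j, hj, hpj⟩ := hm2
        exact hA i hi j hj hpj.symm
    · -- q meets the chain but not x_{i_0}
      push_neg at hA
      obtain ⟨i0, hi0, j0, hj0, hq0⟩ := hA
      set J : Finset ℕ := (Finset.range t).filter (fun i => ∃ j, j < t ∧ q i = p j) with hJ
      have hJne : J.Nonempty := ⟨i0, by
        rw [hJ, Finset.mem_filter, Finset.mem_range]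
        exact ⟨hi0, j0, hj0, hq0⟩⟩
      have hbJ := J.max'_mem hJne
      set b := J.max' hJne with hb
      rw [hJ, Finset.mem_filter, Finset.mem_range] at hbJ
      obtain ⟨hbt, jb, hjbt, hqb⟩ := hbJ
      have hbmax : ∀ i, i < t → (∃ j, j < t ∧ q i = p j) → i ≤ b := by
        intro i hi hex
        exact J.le_max' i (by rw [hJ, Finset.mem_filter, Finset.mem_range]; exact ⟨hi, hex⟩)
      have hdown : ∀ r : ℕ, ∀ i j : ℕ, r ≤ i → i < t → j < t → q i = p j →
          r ≤ j ∧ q (i - r) = p (j - r) := by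
        intro r
        induction r with
        | zero => intro i j _ _ _ h; exact ⟨Nat.zero_le _, by simpa using h⟩
        | succ r ih =>
          intro i j hri hi hj hqp
          obtain ⟨hrj, heq⟩ := ih i j (by omega) hi hj hqp
          have hedge : Γ.toRootedForest.par (q (i - r)) = some (q (i - r - 1)) := by
            have h := hqF.2.1 (i - r - 1) (by omega)
            rwa [show i - r - 1 + 1 = i - r by omega] at h
          by_cases hjr : j - r = 0
          · exfalso
            rw [heq, hjr] at hedge
            exact hB ⟨q (i - r - 1), hedge, i - r - 1, by omega, rfl⟩
          · have hpedge : Γ.toRootedForest.par (p (j - r)) = some (p (j - r - 1)) := by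
              have h := hpe (j - r - 1) (by omega)
              rwa [show j - r - 1 + 1 = j - r by omega] at h
            rw [heq, hpedge] at hedge
            refine ⟨by omega, ?_⟩
            rw [show i - (r+1) = i - r - 1 by omega, show j - (r+1) = j - r - 1 by omega]
            exact (Option.some.inj hedge).symm
      obtain ⟨hble, -⟩ := hdown b b jb le_rfl hbt hjbt hqb
      have hjbne : jb ≠ t - 1 := by
        intro h
        exact hqlast b hbt (by rw [hqb, h])
      have hjblt : jb + 1 < t := by omega
      set ℓ := t - (jb + 1) with hℓ
      set r : ℕ → Fin n := fun i => q (b + 1 + i) with hrr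
      have hrpath : Γ.toRootedForest.IsPath ℓ r := hqF.shift (b+1) ℓ (by omega)
      have hnotp : ∀ i, i < ℓ → ∀ j, j < t → q (b + 1 + i) ≠ p j := by
        intro i hi j hj heq
        have := hbmax (b + 1 + i) (by omega) ⟨j, hj, heq⟩
        omega
      have hnotP : ∀ i, i < ℓ → q (b + 1 + i) ∉ Pset Γ p t := by
        intro i hi hmem
        rcases (Set.mem_union _ _ _).1 hmem with hm1 | hm2
        · exact hB ⟨q (b+1+i), hm1, b+1+i, by omega, rfl⟩
        · obtain ⟨j, hj, hpj⟩ := hm2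
          exact hnotp i hi j hj hpj.symm
      have hlevq : Γ.toRootedForest.level (q (b+1)) = Γ.toRootedForest.level (p (jb + 1)) := by
        have h1 := Γ.toRootedForest.level_parent (hqF.2.1 b (by omega))
        have h2 := Γ.toRootedForest.level_parent (hpe jb (by omega))
        rw [hqb] at h1
        omega
      have hinG : ∀ i, i < ℓ → Γ.toRootedForest.DescOrSelf (p jb) (q (b + 1 + i)) := by
        intro i hi
        refine ⟨i + 1, ?_⟩
        have h := hqF.iter_eq (i + 1) b (by omega)
        rw [show b + (i + 1) = b + 1 + i by omega, hqb] at h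
        exact h
      have hnotG : ∀ i, i < ℓ → ¬ Γ.toRootedForest.DescOrSelf (p (jb + 1)) (q (b + 1 + i)) := by
        intro i hi hdesc
        obtain ⟨m, hm⟩ := hdesc
        have hl1 := Γ.toRootedForest.level_iter m _ _ hm
        have hl2 : Γ.toRootedForest.level (q (b + 1 + i))
            = Γ.toRootedForest.level (q (b+1)) + i := by
          have h := hqF.level_add i (b+1) (by omega)
          rwa [] at h
        have hmi : m = i := by omega
        have hiter := hqF.iter_eq i (b + 1) (by omega)
        rw [hmi, hiter] at hm
        have heq : q (b + 1) = p (jb + 1) := Option.some.inj hm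
        exact hnotp 0 (by omega) (jb + 1) (by omega)
          (by rw [show b + 1 + 0 = b + 1 by omega]; exact heq)
      have hrdel : (DeltaDel Γ p t (jb + 1)).IsPath (t - (jb+1)) r := by
        show (Γ.toRootedForest.delete
          ((GammaSet Γ p (jb+1) \ GammaSet Γ p (jb+1+1))ᶜ ∪ Pset Γ p t)).IsPath ℓ r
        refine (RootedForest.isPath_delete_iff _ _ _ _).2 ⟨hrpath, ?_⟩
        intro i hi hmem
        rcases (Set.mem_union _ _ _).1 hmem with hm1 | hm2
        · exact hm1 ⟨hinG i hi, hnotG i hi⟩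
        · exact hnotP i hi hm2
      refine ⟨sqf r ℓ,
        Set.mem_union _ _ _ |>.2 (Or.inr (Set.mem_iUnion₂.2
          ⟨jb + 1, Finset.mem_range.2 hjblt, ⟨r, hrdel, rfl⟩⟩)),
        sqf_le hrpath.2.2 ?_⟩
      intro i hi
      exact hdpos (b + 1 + i) (by omega) (hnotp i hi)

end Witnesses

/-- (Lemma on the colon ideal.)  With `x_{i_t} = p (t-1)` a leaf at the
highest level `h ≥ t-1` of `Γ`, one has
`I_t(Γ∖{x_{i_t}}) : (x_{i_1}⋯x_{i_t}) = I_t(Γ∖P) + (x_{i_0}) + Σ_{j=0}^{t-1} I_{t-j}(Δ_j∖P)`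
(the summand `(x_{i_0})` being zero when `x_{i_0}` does not exist). -/
theorem colon_pathIdeal_decomposition {n t : ℕ} (ht : 2 ≤ t) (k : Type*) [Field k]
    (Γ : RootedTreeOn n) (p : ℕ → Fin n)
    (hht : t - 1 ≤ Γ.toRootedForest.height)
    (hp : Γ.toRootedForest.IsPath t p)
    (hleaf : Γ.toRootedForest.IsLeaf (p (t - 1)))
    (hlev : Γ.toRootedForest.level (p (t - 1)) = Γ.toRootedForest.height) :
    (pathIdeal k (Γ.toRootedForest.delete {p (t - 1)}) t).colon
        ((Ideal.span {∏ j ∈ Finset.range t, MvPolynomial.X (p j)} :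
          Ideal (MvPolynomial (Fin n) k)) : Set (MvPolynomial (Fin n) k)) =
      pathIdeal k (Γ.toRootedForest.delete (Pset Γ p t)) t
        + Ideal.span {f | ∃ u, Γ.par (p 0) = some u ∧ f = MvPolynomial.X u}
        + ∑ j ∈ Finset.range t, pathIdeal k (DeltaDel Γ p t j) (t - j) := by
  classical
  have hIchar : ∀ f : MvPolynomial (Fin n) k,
      f ∈ pathIdeal k (Γ.toRootedForest.delete {p (t - 1)}) t ↔
        ∀ d ∈ f.support,
          ∃ s ∈ {s | ∃ q, (Γ.toRootedForest.delete ({p (t-1)} : Set (Fin n))).IsPath t q ∧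
            s = sqf q t}, s ≤ d := by
    intro f
    rw [pathIdeal_eq]
    exact MvPolynomial.mem_ideal_span_monomial_image
  have hsum : (∑ j ∈ Finset.range t, pathIdeal k (DeltaDel Γ p t j) (t - j)) =
      Ideal.span ((fun s => (MvPolynomial.monomial s (1:k) : MvPolynomial (Fin n) k)) ''
        ⋃ j ∈ Finset.range t,
          {s | ∃ q, (DeltaDel Γ p t j).IsPath (t - j) q ∧ s = sqf q (t - j)}) := by
    calc (∑ j ∈ Finset.range t, pathIdeal k (DeltaDel Γ p t j) (t - j))
        = ∑ j ∈ Finset.range t,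
            Ideal.span ((fun s => (MvPolynomial.monomial s (1:k) : MvPolynomial (Fin n) k)) ''
              {s | ∃ q, (DeltaDel Γ p t j).IsPath (t - j) q ∧ s = sqf q (t - j)}) :=
          Finset.sum_congr rfl fun j _ => pathIdeal_eq _ _
      _ = Ideal.span (⋃ j ∈ Finset.range t,
            (fun s => (MvPolynomial.monomial s (1:k) : MvPolynomial (Fin n) k)) ''
              {s | ∃ q, (DeltaDel Γ p t j).IsPath (t - j) q ∧ s = sqf q (t - j)}) :=
          (span_biUnion _ _).symm
      _ = _ := by rw [Set.image_iUnion₂]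
  have hRHS : pathIdeal k (Γ.toRootedForest.delete (Pset Γ p t)) t
        + Ideal.span {f | ∃ u, Γ.par (p 0) = some u ∧ f = MvPolynomial.X u}
        + ∑ j ∈ Finset.range t, pathIdeal k (DeltaDel Γ p t j) (t - j) =
      Ideal.span ((fun s => (MvPolynomial.monomial s (1:k) : MvPolynomial (Fin n) k)) ''
        ({s | ∃ q, (Γ.toRootedForest.delete (Pset Γ p t)).IsPath t q ∧ s = sqf q t}
          ∪ {s | ∃ u, Γ.par (p 0) = some u ∧ s = Finsupp.single u 1}
          ∪ ⋃ j ∈ Finset.range t,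
              {s | ∃ q, (DeltaDel Γ p t j).IsPath (t - j) q ∧ s = sqf q (t - j)})) := by
    rw [pathIdeal_eq, Bspan_eq, hsum, Set.image_union, Set.image_union, Ideal.span_union,
      Ideal.span_union, Submodule.add_eq_sup, Submodule.add_eq_sup]
  rw [hRHS]
  apply le_antisymm
  · intro f hf
    rw [Ideal.mem_colon_span_singleton] at hf
    rw [MvPolynomial.mem_ideal_span_monomial_image]
    intro d hd
    have hd2 : d + sqf p t ∈ (f * ∏ j ∈ Finset.range t, MvPolynomial.X (p j)).support := by
      rw [prod_X_eq, MvPolynomial.mem_support_iff, MvPolynomial.coeff_mul_monomial, mul_one]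
      exact MvPolynomial.mem_support_iff.1 hd
    obtain ⟨s, hsmem, hsle⟩ := (hIchar _).1 hf _ hd2
    obtain ⟨q, hq, rfl⟩ := hsmem
    exact exists_gen_witness ht hp hq hsle
  · rw [Ideal.span_le]
    rintro _ ⟨a, ha, rfl⟩
    rw [SetLike.mem_coe, Ideal.mem_colon_span_singleton]
    refine (hIchar _).2 ?_
    intro dd hdd
    rw [prod_X_eq, MvPolynomial.monomial_mul, one_mul] at hdd
    simp only [MvPolynomial.support_monomial, one_ne_zero, if_false,
      Finset.mem_singleton] at hdd
    subst hdd
    exact exists_path_witness ht hp hlev ha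
end

section
/- Let n > t. Then in S = k[x_1,…,x_n] one has the equality of ideals I_t(L_{n-1}) : (x_{n-t+1} x_{n-t+2} ⋯ x_n) = (x_{n-t}) + I_t(L_{n-(t+1)}), where I_t(L_{n-(t+1)}) = (0) if n-(t+1) < t. -/
open MvPolynomial

/-- Exponent vector of the generator starting at `i`: indicator of `[i, i+t)`. -/
noncomputable def pathExp (n t i : ℕ) : Fin n →₀ ℕ :=
  Finsupp.equivFunOnFinite.symm (fun m => if i ≤ m.1 ∧ m.1 < i + t then 1 else 0)

@[simp] lemma pathExp_apply (n t i : ℕ) (m : Fin n) :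
    pathExp n t i m = if i ≤ m.1 ∧ m.1 < i + t then 1 else 0 := rfl

lemma prod_X_eq_monomial {k : Type*} [Field k] (n t i : ℕ) (h : i + t ≤ n) :
    (∏ j : Fin t, MvPolynomial.X (⟨i + j.1, by have := j.isLt; omega⟩ : Fin n))
      = (monomial (pathExp n t i) (1 : k)) := by
  have key : ∀ (s : Finset (Fin t)),
      (∏ j ∈ s, MvPolynomial.X (⟨i + j.1, by have := j.isLt; omega⟩ : Fin n))
        = (monomial (∑ j ∈ s, Finsupp.single (⟨i + j.1, by have := j.isLt; omega⟩ : Fin n) 1)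
            (1 : k)) := by
    intro s
    induction s using Finset.induction with
    | empty => simp [monomial_zero']
    | insert j s hj ih =>
      rw [Finset.prod_insert hj, Finset.sum_insert hj, ih, X, monomial_mul, one_mul]
  rw [key Finset.univ]
  refine congrArg (fun s => monomial s (1 : k)) ?_
  ext m
  rw [Finsupp.finset_sum_apply]
  simp only [Finsupp.single_apply]
  by_cases hm : i ≤ m.1 ∧ m.1 < i + t
  · have ht0 : m.1 - i < t := by omega
    have : ∀ j : Fin t, ((⟨i + j.1, by have := j.isLt; omega⟩ : Fin n) = m) ↔ j = ⟨m.1 - i, ht0⟩ := by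
      intro j
      constructor
      · intro hh; apply Fin.ext; have := congrArg Fin.val hh; simp at this ⊢; omega
      · intro hh; subst hh; apply Fin.ext; simp; omega
    simp only [this]
    rw [Finset.sum_ite_eq' Finset.univ]
    simp [hm]
  · have : ∀ j : Fin t, ¬((⟨i + j.1, by have := j.isLt; omega⟩ : Fin n) = m) := by
      intro j hh
      have := congrArg Fin.val hh; simp at this; omega
    simp only [this, if_neg, if_false]
    simp [hm]

/-- The path ideal `I_t(L_m)` of the path graph `L_m : x_1 → x_2 → ⋯ → x_m`, viewed inside
`S = k[x_1,…,x_n]` (with variables indexed by `0,…,n-1`): it is generated by the monomials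
`x_{i+1} x_{i+2} ⋯ x_{i+t}` for `0 ≤ i ≤ m - t`.  By convention it is `(0)` when `m < t`. -/
noncomputable def linePathIdeal (k : Type*) [Field k] (n t m : ℕ) :
    Ideal (MvPolynomial (Fin n) k) :=
  Ideal.span {f | ∃ (i : ℕ) (_ : i + t ≤ m) (h : i + t ≤ n),
    f = ∏ j : Fin t, MvPolynomial.X (⟨i + j.1, by have := j.isLt; omega⟩ : Fin n)}

lemma linePathIdeal_eq (k : Type*) [Field k] (n t m : ℕ) :
    linePathIdeal k n t m =
      Ideal.span ((fun s => monomial s (1 : k)) ''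
        {s | ∃ i : ℕ, i + t ≤ m ∧ i + t ≤ n ∧ s = pathExp n t i}) := by
  unfold linePathIdeal
  congr 1
  ext f
  simp only [Set.mem_setOf_eq, Set.mem_image]
  constructor
  · rintro ⟨i, h1, h2, rfl⟩
    exact ⟨pathExp n t i, ⟨i, h1, h2, rfl⟩, (prod_X_eq_monomial n t i h2).symm⟩
  · rintro ⟨s, ⟨i, h1, h2, rfl⟩, rfl⟩
    exact ⟨i, h1, h2, (prod_X_eq_monomial n t i h2).symm⟩

lemma key_combinatorics {n t : ℕ} (ht : 2 ≤ t) (hn : t < n) (m : Fin n →₀ ℕ) :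
    (∃ i : ℕ, i + t ≤ n - 1 ∧ i + t ≤ n ∧ pathExp n t i ≤ m + pathExp n t (n - t)) ↔
      (Finsupp.single (⟨n - t - 1, by have := hn; omega⟩ : Fin n) 1 ≤ m ∨
        ∃ i : ℕ, i + t ≤ n - (t + 1) ∧ i + t ≤ n ∧ pathExp n t i ≤ m) := by
  constructor
  · rintro ⟨i, h1, h2, hle⟩
    rw [Finsupp.le_def] at hle
    by_cases hc : n ≤ i + t + t
    · left
      rw [Finsupp.single_le_iff]
      have := hle ⟨n - t - 1, by omega⟩
      simp only [pathExp_apply, Finsupp.coe_add, Pi.add_apply] at this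
      rw [if_pos (by omega), if_neg (by omega)] at this
      simpa using this
    · right
      refine ⟨i, by omega, h2, Finsupp.le_def.mpr fun j => ?_⟩
      have := hle j
      simp only [pathExp_apply, Finsupp.coe_add, Pi.add_apply] at this ⊢
      by_cases hj : i ≤ j.1 ∧ j.1 < i + t
      · rw [if_pos hj] at this ⊢
        rw [if_neg (by omega)] at this
        simpa using this
      · rw [if_neg hj]; exact Nat.zero_le _
  · rintro (h | ⟨i, h1, h2, hle⟩)
    · rw [Finsupp.single_le_iff] at h
      refine ⟨n - t - 1, by omega, by omega, Finsupp.le_def.mpr fun j => ?_⟩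
      simp only [pathExp_apply, Finsupp.coe_add, Pi.add_apply]
      by_cases hj : n - t - 1 ≤ j.1 ∧ j.1 < n - t - 1 + t
      · rw [if_pos hj]
        by_cases hj2 : j.1 = n - t - 1
        · have : j = (⟨n - t - 1, by omega⟩ : Fin n) := Fin.ext hj2
          rw [this, if_neg (by omega)]
          simpa using h
        · rw [if_pos (by omega)]
          omega
      · rw [if_neg hj]; exact Nat.zero_le _
    · refine ⟨i, by omega, h2, le_trans hle (Finsupp.le_def.mpr fun j => ?_)⟩
      simp only [Finsupp.coe_add, Pi.add_apply]
      exact Nat.le_add_right _ _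

/-- For `n > t`, in `S = k[x_1,…,x_n]` one has
`I_t(L_{n-1}) : (x_{n-t+1} x_{n-t+2} ⋯ x_n) = (x_{n-t}) + I_t(L_{n-(t+1)})`
(with `I_t(L_{n-(t+1)}) = (0)` if `n - (t+1) < t`). -/
theorem linePathIdeal_colon {n t : ℕ} (ht : 2 ≤ t) (k : Type*) [Field k]
    (hn : t < n) :
    (linePathIdeal k n t (n - 1)).colon
        ((Ideal.span {∏ j : Fin t,
          MvPolynomial.X (⟨(n - t) + j.1, by have := j.isLt; omega⟩ : Fin n)} :
            Ideal (MvPolynomial (Fin n) k)) : Set (MvPolynomial (Fin n) k)) =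
      Ideal.span {(MvPolynomial.X (⟨n - t - 1, by omega⟩ : Fin n) : MvPolynomial (Fin n) k)} +
        linePathIdeal k n t (n - (t + 1)) := by
  have he : (∏ j : Fin t,
      MvPolynomial.X (⟨(n - t) + j.1, by have := j.isLt; omega⟩ : Fin n))
      = (monomial (pathExp n t (n - t)) (1 : k)) :=
    prod_X_eq_monomial n t (n - t) (by omega)
  rw [he, linePathIdeal_eq, linePathIdeal_eq]
  have hX : (MvPolynomial.X (⟨n - t - 1, by omega⟩ : Fin n) : MvPolynomial (Fin n) k)
      = monomial (Finsupp.single (⟨n - t - 1, by omega⟩ : Fin n) 1) 1 := rfl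
  rw [hX]
  have hspan : Ideal.span {(monomial (Finsupp.single (⟨n - t - 1, by omega⟩ : Fin n) 1)
        (1 : k))} = Ideal.span ((fun s => monomial s (1 : k)) ''
        {Finsupp.single (⟨n - t - 1, by omega⟩ : Fin n) 1}) := by
    rw [Set.image_singleton]
  rw [hspan, Submodule.add_eq_sup, ← Ideal.span_union, ← Set.image_union]
  ext p
  rw [Ideal.mem_colon_span_singleton, mem_ideal_span_monomial_image,
    mem_ideal_span_monomial_image]
  constructor
  · intro H m hm
    have hcoeff : coeff (m + pathExp n t (n - t)) (p * monomial (pathExp n t (n - t)) 1) ≠ 0 := by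
      rw [coeff_mul_monomial, mul_one]
      exact mem_support_iff.mp hm
    obtain ⟨si, ⟨i, h1, h2, rfl⟩, hle⟩ := H _ (mem_support_iff.mpr hcoeff)
    have := (key_combinatorics ht hn m).mp ⟨i, h1, h2, hle⟩
    rcases this with h | ⟨i, h1, h2, hle⟩
    · exact ⟨_, Set.mem_union_left _ rfl, h⟩
    · exact ⟨pathExp n t i, Set.mem_union_right _ ⟨i, h1, h2, rfl⟩, hle⟩
  · intro H xi hxi
    rw [mem_support_iff, coeff_mul_monomial'] at hxi
    split_ifs at hxi with hle
    · rw [mul_one] at hxi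
      obtain ⟨si, hsi, hsile⟩ := H _ (mem_support_iff.mpr hxi)
      have hxe : xi - pathExp n t (n - t) + pathExp n t (n - t) = xi :=
        tsub_add_cancel_of_le hle
      have : Finsupp.single (⟨n - t - 1, by omega⟩ : Fin n) 1 ≤ xi - pathExp n t (n - t) ∨
          ∃ i : ℕ, i + t ≤ n - (t + 1) ∧ i + t ≤ n ∧
            pathExp n t i ≤ xi - pathExp n t (n - t) := by
        rcases hsi with hsi | hsi
        · left; rw [Set.mem_singleton_iff] at hsi; rw [← hsi]; exact hsile
        · obtain ⟨i, h1, h2, rfl⟩ := hsi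
          exact Or.inr ⟨i, h1, h2, hsile⟩
      obtain ⟨i, h1, h2, hile⟩ := (key_combinatorics ht hn _).mpr this
      rw [hxe] at hile
      exact ⟨pathExp n t i, ⟨i, h1, h2, rfl⟩, hile⟩
    · exact absurd rfl hxi
end
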